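/- For the Gaussian kernel k(x,t) = σ² exp(−(x−t)²/(2ℓ²)) in one dimension, the infinite HSGP series k̂_∞(x,t) = Σ_{j=1}^∞ S(πj/(2L)) φ_j(x) φ_j(t) with S the Gaussian spectral density and φ_j the Dirichlet sine basis on (−L,L) satisfies the pointwise bound sup_{x,t ∈ (−B,B)} |k̂_∞(x,t) − k(x,t)| ≤ σ² · 5 · (3 + √(2π)ℓ/(4L)) · exp(−2(L−B)²/ℓ²), for any 0 < B < L. -/

import Mathlib

open Real

lemma hsgp_summable_exp_neg_mul_int_sq {a : ℝ} (ha : 0 < a) :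
    Summable fun n : ℤ => Real.exp (-a * (n:ℝ) ^ 2) := by
  have h := summable_pow_mul_jacobiTheta₂_term_bound 0 (show 0 < a / π from div_pos ha Real.pi_pos) 0
  refine h.congr fun n => ?_
  have hπ : π ≠ 0 := Real.pi_ne_zero
  rw [pow_zero, one_mul]
  congr 1
  field_simp
  ring

lemma hsgp_summable_gauss_shift {L ℓ : ℝ} (hL : 0 < L) (hℓ : 0 < ℓ) (r : ℝ) :
    Summable fun n : ℤ => Real.exp (-(r - 4*L*n) ^ 2 / (2*ℓ^2)) := by
  have hT : 0 < 8*L^2/(π*ℓ^2) := by positivity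
  have h := summable_pow_mul_jacobiTheta₂_term_bound (2*L*|r|/(π*ℓ^2)) hT 0
  have h' : Summable fun n : ℤ =>
      Real.exp ((-(8 * L ^ 2 * (n : ℝ) ^ 2) + 4 * L * |r| * |(n : ℝ)|) / ℓ ^ 2) := by
    refine h.congr fun n => ?_
    rw [pow_zero, one_mul]
    congr 1
    rw [Int.cast_abs]
    have hπ : π ≠ 0 := Real.pi_ne_zero
    field_simp
    ring
  refine Summable.of_nonneg_of_le (fun n => (Real.exp_pos _).le) (fun n => ?_) h'
  rw [Real.exp_le_exp]
  have h1 : r * (n:ℝ) ≤ |r| * |(n:ℝ)| := by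
    calc r * n ≤ |r * n| := le_abs_self _
    _ = |r| * |(n:ℝ)| := abs_mul _ _
  rw [div_le_div_iff₀ (by positivity) (by positivity)]
  have h2 : 8 * L * (r * (n:ℝ)) * ℓ ^ 2 ≤ 8 * L * (|r| * |(n:ℝ)|) * ℓ ^ 2 := by
    have := mul_le_mul_of_nonneg_left h1 (by positivity : (0:ℝ) ≤ 8 * L)
    exact mul_le_mul_of_nonneg_right this (sq_nonneg ℓ)
  nlinarith [mul_nonneg (sq_nonneg r) (sq_nonneg ℓ)]

lemma hsgp_poisson_gauss {a : ℝ} (ha : 0 < a) (β : ℝ) :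
    ∑' n : ℤ, Real.exp (-a * (n:ℝ) ^ 2) * Real.cos (β * n)
      = Real.sqrt (π / a) * ∑' n : ℤ, Real.exp (-(β - 2 * π * n) ^ 2 / (4 * a)) := by
  have hπ : (0:ℝ) < π := Real.pi_pos
  have haπ : (0:ℝ) < a / π := div_pos ha hπ
  have h1 : 0 < (((a / π : ℝ)) : ℂ).re := by simpa using haπ
  have key := Complex.tsum_exp_neg_quadratic h1 (Complex.I * ((β : ℂ) / (2 * π)))
  have hπc : (π : ℂ) ≠ 0 := by exact_mod_cast hπ.ne'
  have hL : ∀ n : ℤ, -(π:ℂ) * ((a/π : ℝ) : ℂ) * (n:ℂ) ^ 2 + 2 * (π:ℂ) * (Complex.I * ((β:ℂ) / (2 * π))) * (n:ℂ)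
      = ((-a * (n:ℝ)^2 : ℝ) : ℂ) + ((β * n : ℝ) : ℂ) * Complex.I := by
    intro n
    push_cast
    field_simp
  have hR : ∀ n : ℤ, -(π:ℂ) / ((a/π : ℝ) : ℂ) * ((n:ℂ) + Complex.I * (Complex.I * ((β:ℂ) / (2 * π)))) ^ 2
      = ((-(β - 2 * π * n) ^ 2 / (4 * a) : ℝ) : ℂ) := by
    intro n
    have hac : ((a:ℝ):ℂ) ≠ 0 := by exact_mod_cast ha.ne'
    rw [← mul_assoc, Complex.I_mul_I]
    push_cast
    field_simp
    ring
  simp only [hL, hR] at key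
  have hre : ∀ (u v : ℝ), (((u:ℂ)) + (v:ℂ) * Complex.I).re = u := by
    intro u v
    simp
  have him : ∀ (u v : ℝ), (((u:ℂ)) + (v:ℂ) * Complex.I).im = v := by
    intro u v
    simp
  have hsum : Summable fun n : ℤ => Complex.exp (((-a * (n:ℝ)^2 : ℝ) : ℂ) + ((β * n : ℝ) : ℂ) * Complex.I) := by
    refine Summable.of_norm_bounded (hsgp_summable_exp_neg_mul_int_sq ha) fun n => ?_
    rw [Complex.norm_exp, hre]
  have hpow : (((a/π : ℝ) : ℂ)) ^ (1/2 : ℂ) = ((Real.sqrt (a/π) : ℝ) : ℂ) := by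
    rw [Real.sqrt_eq_rpow]
    rw [Complex.ofReal_cpow haπ.le]
    norm_num
  have e1 : ∑' n : ℤ, Real.exp (-a * (n:ℝ) ^ 2) * Real.cos (β * n)
      = (∑' n : ℤ, Complex.exp (((-a * (n:ℝ)^2 : ℝ) : ℂ) + ((β * n : ℝ) : ℂ) * Complex.I)).re := by
    rw [Complex.re_tsum hsum]
    refine tsum_congr fun n => ?_
    rw [Complex.exp_re, hre, him]
  have h2 : ∑' n : ℤ, Complex.exp (((-(β - 2 * π * n) ^ 2 / (4 * a) : ℝ) : ℂ))
      = ((∑' n : ℤ, Real.exp (-(β - 2 * π * n) ^ 2 / (4 * a)) : ℝ) : ℂ) := by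
    rw [Complex.ofReal_tsum]
    exact tsum_congr fun n => (Complex.ofReal_exp _).symm
  rw [e1, key, hpow, h2]
  rw [show (1:ℂ)/((Real.sqrt (a/π) : ℝ) : ℂ) = ((1/Real.sqrt (a/π) : ℝ) : ℂ) by push_cast; ring]
  rw [← Complex.ofReal_mul, Complex.ofReal_re]
  congr 1
  rw [one_div, ← Real.sqrt_inv, inv_div]

lemma hsgp_summable_exp_neg_nat_sq {c : ℝ} (hc : 0 < c) :
    Summable fun j : ℕ => Real.exp (-c * (j:ℝ) ^ 2) := by
  refine Summable.of_nonneg_of_le (fun j => (Real.exp_pos _).le) (fun j => ?_)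
    (summable_geometric_of_lt_one (r := Real.exp (-c)) (Real.exp_pos _).le
      (by rw [Real.exp_lt_one_iff]; linarith))
  rw [← Real.exp_nat_mul, Real.exp_le_exp]
  have hj : (j:ℝ) ≤ (j:ℝ) ^ 2 := by exact_mod_cast Nat.le_self_pow two_ne_zero j
  nlinarith

lemma hsgp_gauss_tail {c : ℝ} (hc : 0 < c) :
    ∑' j : ℕ, Real.exp (-c * ((j:ℝ) + 1) ^ 2) ≤ Real.sqrt (π / c) / 2 := by
  refine Real.tsum_le_of_sum_range_le (fun n => (Real.exp_pos _).le) fun n => ?_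
  have hanti : AntitoneOn (fun u : ℝ => Real.exp (-c * u ^ 2)) (Set.Icc (0:ℝ) (0 + n)) := by
    intro u hu v hv huv
    rw [Real.exp_le_exp]
    nlinarith [mul_le_mul huv huv hu.1 (hu.1.trans huv)]
  have h1 := hanti.sum_le_integral
  have h2 : ∑ i ∈ Finset.range n, Real.exp (-c * ((i:ℝ) + 1) ^ 2)
      = ∑ i ∈ Finset.range n, (fun u : ℝ => Real.exp (-c * u ^ 2)) (0 + ((i + 1 : ℕ) : ℝ)) := by
    refine Finset.sum_congr rfl fun i _ => ?_
    push_cast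
    ring_nf
  rw [h2]
  refine h1.trans ?_
  rw [intervalIntegral.integral_of_le (by positivity : (0:ℝ) ≤ 0 + (n:ℝ))]
  have h3 : ∫ x in Set.Ioc (0:ℝ) (0 + n), Real.exp (-c * x ^ 2)
      ≤ ∫ x in Set.Ioi (0:ℝ), Real.exp (-c * x ^ 2) :=
    MeasureTheory.setIntegral_mono_set (integrable_exp_neg_mul_sq hc).integrableOn
      (MeasureTheory.ae_of_all _ fun x => (Real.exp_pos _).le)
      (HasSubset.Subset.eventuallyLE Set.Ioc_subset_Ioi_self)
  refine h3.trans_eq ?_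
  exact integral_gaussian_Ioi c

lemma hsgp_tsum_int_split {q : ℤ → ℝ} (hq : Summable q) (heven : ∀ n : ℤ, q (-n) = q n) :
    ∑' n : ℤ, q n = q 0 + 2 * ∑' n : ℕ, q ((n:ℤ) + 1) := by
  have hinj : Function.Injective (fun n : ℕ => (-((n:ℤ) + 1) : ℤ)) := by
    intro a b hab
    simp only at hab
    omega
  have h1 : Summable fun n : ℕ => q n :=
    hq.comp_injective (fun a b hab => by exact_mod_cast hab)
  have h2 : Summable fun n : ℕ => q (-((n:ℤ) + 1)) := hq.comp_injective hinj
  rw [tsum_of_nat_of_neg_add_one h1 h2, Summable.tsum_eq_zero_add h1]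
  have e1 : ∑' n : ℕ, q (-((n:ℤ) + 1)) = ∑' n : ℕ, q ((n:ℤ) + 1) :=
    tsum_congr fun n => heven _
  rw [e1]
  push_cast
  ring

set_option maxHeartbeats 1000000 in
/-- Aliasing error of the infinite HSGP series for the one-dimensional Gaussian
kernel: `sup_{x,t∈(−B,B)} |k̂_∞(x,t) − k(x,t)| ≤ 5σ²(3 + √(2π)ℓ/(4L)) e^{−2(L−B)²/ℓ²}`. -/
theorem gaussian_hsgp_aliasing_error_1d (σ2 ℓ B L : ℝ)
    (hσ : 0 < σ2) (hℓ : 0 < ℓ) (hB : 0 < B) (hBL : B < L)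
    (S : ℝ → ℝ)
    (hS : ∀ ω, S ω = σ2 * Real.sqrt (2 * π) * ℓ * Real.exp (-(ℓ ^ 2 * ω ^ 2) / 2))
    (φ : ℕ → ℝ → ℝ)
    (hφ : ∀ j x, φ j x = (Real.sqrt L)⁻¹ * Real.sin (π * j * (x + L) / (2 * L)))
    (k : ℝ → ℝ → ℝ)
    (hk : ∀ x t, k x t = σ2 * Real.exp (-(x - t) ^ 2 / (2 * ℓ ^ 2)))
    (khat : ℝ → ℝ → ℝ)
    (hkhat : ∀ x t, khat x t = ∑' j : ℕ, S (π * (j + 1) / (2 * L)) * φ (j + 1) x * φ (j + 1) t) :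
    ∀ x ∈ Set.Ioo (-B) B, ∀ t ∈ Set.Ioo (-B) B,
      |khat x t - k x t|
        ≤ σ2 * 5 * (3 + Real.sqrt (2 * π) * ℓ / (4 * L))
            * Real.exp (-2 * (L - B) ^ 2 / ℓ ^ 2) := by
  intro x hx t ht
  obtain ⟨hx1, hx2⟩ := hx
  obtain ⟨ht1, ht2⟩ := ht
  have hL : 0 < L := hB.trans hBL
  have hπ : (0:ℝ) < π := Real.pi_pos
  set A : ℝ := ℓ^2 * π^2 / (8 * L^2) with hAdef
  have hA : 0 < A := by positivity
  -- the two image sums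
  set g₁ : ℤ → ℝ := fun n => Real.exp (-(x - t - 4*L*n) ^ 2 / (2*ℓ^2)) with hg₁
  set g₂ : ℤ → ℝ := fun n => Real.exp (-(x + t + 2*L - 4*L*n) ^ 2 / (2*ℓ^2)) with hg₂
  have sg₁ : Summable g₁ := hsgp_summable_gauss_shift hL hℓ (x - t)
  have sg₂ : Summable g₂ := hsgp_summable_gauss_shift hL hℓ (x + t + 2*L)
  -- step 1: the pointwise Poisson identity for each half-period sum
  have hps : ∀ r : ℝ,
      ∑' j : ℕ, Real.exp (-A * ((j:ℝ) + 1) ^ 2) * Real.cos (π * r / (2*L) * ((j:ℝ) + 1))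
        = (Real.sqrt (π/A) * (∑' n : ℤ, Real.exp (-(r - 4*L*n) ^ 2 / (2*ℓ^2))) - 1) / 2 := by
    intro r
    set q : ℤ → ℝ := fun n => Real.exp (-A * (n:ℝ) ^ 2) * Real.cos (π * r / (2*L) * (n:ℝ)) with hqdef
    have hq : Summable q := by
      refine Summable.of_norm_bounded (hsgp_summable_exp_neg_mul_int_sq hA) fun n => ?_
      rw [Real.norm_eq_abs, abs_mul, Real.abs_exp]
      calc Real.exp (-A * (n:ℝ)^2) * |Real.cos (π * r / (2*L) * (n:ℝ))|
          ≤ Real.exp (-A * (n:ℝ)^2) * 1 :=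
            mul_le_mul_of_nonneg_left (Real.abs_cos_le_one _) (Real.exp_pos _).le
        _ = Real.exp (-A * (n:ℝ)^2) := mul_one _
    have heven : ∀ n : ℤ, q (-n) = q n := by
      intro n
      simp only [hqdef, Int.cast_neg, mul_neg, neg_sq, Real.cos_neg]
    have hsplit := hsgp_tsum_int_split hq heven
    have hq0 : q 0 = 1 := by simp [hqdef]
    have hpois := hsgp_poisson_gauss hA (π * r / (2*L))
    have hexp : ∀ n : ℤ, Real.exp (-(π * r / (2*L) - 2 * π * n) ^ 2 / (4 * A))
        = Real.exp (-(r - 4*L*n) ^ 2 / (2*ℓ^2)) := by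
      intro n
      congr 1
      rw [hAdef]
      field_simp
      ring
    rw [tsum_congr hexp] at hpois
    have e3 : ∑' j : ℕ, Real.exp (-A * ((j:ℝ) + 1) ^ 2) * Real.cos (π * r / (2*L) * ((j:ℝ) + 1))
        = ∑' n : ℕ, q ((n:ℤ) + 1) := by
      refine tsum_congr fun n => ?_
      simp only [hqdef]
      push_cast
      ring_nf
    rw [e3]
    have := hsplit
    rw [hq0, hpois] at this
    linarith
  -- step 2: khat in terms of the image sums
  have hsqA : Real.sqrt (2*π) * Real.sqrt (π/A) = 4*L/ℓ := by
    rw [← Real.sqrt_mul (by positivity)]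
    rw [show (2*π) * (π/A) = (4*L/ℓ)^2 by rw [hAdef]; field_simp; ring]
    exact Real.sqrt_sq (by positivity)
  have hkey1 : ∀ m : ℝ,
      σ2 * Real.sqrt (2*π) * ℓ * Real.exp (-(ℓ^2 * (π * m / (2*L))^2)/2) *
        ((Real.sqrt L)⁻¹ * Real.sin (π * m * (x + L) / (2*L))) *
        ((Real.sqrt L)⁻¹ * Real.sin (π * m * (t + L) / (2*L)))
      = (σ2 * Real.sqrt (2*π) * ℓ / (2*L)) *
          (Real.exp (-A * m^2) * Real.cos (π * (x - t) / (2*L) * m)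
            - Real.exp (-A * m^2) * Real.cos (π * (x + t + 2*L) / (2*L) * m)) := by
    intro m
    have hLs : (Real.sqrt L)⁻¹ * (Real.sqrt L)⁻¹ = L⁻¹ := by
      rw [← mul_inv, Real.mul_self_sqrt hL.le]
    have hsin : ∀ a b : ℝ, Real.sin a * Real.sin b = (Real.cos (a - b) - Real.cos (a + b)) / 2 := by
      intro a b
      rw [Real.cos_sub_cos, show (a - b + (a + b))/2 = a by ring,
        show (a - b - (a + b))/2 = -b by ring, Real.sin_neg]
      ring
    have e1 : -(ℓ^2 * (π * m / (2*L))^2)/2 = -A * m^2 := by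
      rw [hAdef]; field_simp; ring
    have e2 : π * m * (x + L) / (2*L) - π * m * (t + L) / (2*L) = π * (x - t) / (2*L) * m := by
      ring
    have e4 : π * m * (x + L) / (2*L) + π * m * (t + L) / (2*L) = π * (x + t + 2*L) / (2*L) * m := by
      ring
    calc σ2 * Real.sqrt (2*π) * ℓ * Real.exp (-(ℓ^2 * (π * m / (2*L))^2)/2) *
        ((Real.sqrt L)⁻¹ * Real.sin (π * m * (x + L) / (2*L))) *
        ((Real.sqrt L)⁻¹ * Real.sin (π * m * (t + L) / (2*L)))
        = σ2 * Real.sqrt (2*π) * ℓ * Real.exp (-(ℓ^2 * (π * m / (2*L))^2)/2) *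
          ((Real.sqrt L)⁻¹ * (Real.sqrt L)⁻¹) *
          (Real.sin (π * m * (x + L) / (2*L)) * Real.sin (π * m * (t + L) / (2*L))) := by ring
      _ = σ2 * Real.sqrt (2*π) * ℓ * Real.exp (-A * m^2) * L⁻¹ *
          ((Real.cos (π * (x - t) / (2*L) * m) - Real.cos (π * (x + t + 2*L) / (2*L) * m)) / 2) := by
          rw [e1, hLs, hsin, e2, e4]
      _ = (σ2 * Real.sqrt (2*π) * ℓ / (2*L)) *
          (Real.exp (-A * m^2) * Real.cos (π * (x - t) / (2*L) * m)
            - Real.exp (-A * m^2) * Real.cos (π * (x + t + 2*L) / (2*L) * m)) := by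
          field_simp
  -- summability of the two ℕ-indexed pieces
  have sN : ∀ r : ℝ, Summable (fun j : ℕ =>
      Real.exp (-A * ((j:ℝ) + 1) ^ 2) * Real.cos (π * r / (2*L) * ((j:ℝ) + 1))) := by
    intro r
    have sExp : Summable (fun j : ℕ => Real.exp (-A * ((j:ℝ) + 1) ^ 2)) := by
      have h := (summable_nat_add_iff (f := fun j : ℕ => Real.exp (-A * (j:ℝ) ^ 2)) 1).2
        (hsgp_summable_exp_neg_nat_sq hA)
      refine h.congr fun j => ?_
      push_cast
      ring_nf
    refine Summable.of_norm_bounded sExp fun j => ?_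
    rw [Real.norm_eq_abs, abs_mul, Real.abs_exp]
    calc Real.exp (-A * ((j:ℝ)+1)^2) * |Real.cos (π * r / (2*L) * ((j:ℝ)+1))|
        ≤ Real.exp (-A * ((j:ℝ)+1)^2) * 1 :=
          mul_le_mul_of_nonneg_left (Real.abs_cos_le_one _) (Real.exp_pos _).le
      _ = Real.exp (-A * ((j:ℝ)+1)^2) := mul_one _
  have hkh : khat x t = σ2 * ((∑' n : ℤ, g₁ n) - (∑' n : ℤ, g₂ n)) := by
    rw [hkhat]
    have e5 : ∀ j : ℕ, S (π * ((j:ℝ) + 1) / (2 * L)) * φ (j + 1) x * φ (j + 1) t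
        = (σ2 * Real.sqrt (2*π) * ℓ / (2*L)) *
            (Real.exp (-A * ((j:ℝ)+1)^2) * Real.cos (π * (x - t) / (2*L) * ((j:ℝ)+1))
              - Real.exp (-A * ((j:ℝ)+1)^2) * Real.cos (π * (x + t + 2*L) / (2*L) * ((j:ℝ)+1))) := by
      intro j
      rw [hS, hφ, hφ]
      have c1 : (((j+1:ℕ)):ℝ) = (j:ℝ) + 1 := by push_cast; ring
      rw [c1]
      exact hkey1 ((j:ℝ) + 1)
    rw [tsum_congr e5, tsum_mul_left]
    have e6 : ∑' j : ℕ,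
        (Real.exp (-A * ((j:ℝ)+1)^2) * Real.cos (π * (x - t) / (2*L) * ((j:ℝ)+1))
          - Real.exp (-A * ((j:ℝ)+1)^2) * Real.cos (π * (x + t + 2*L) / (2*L) * ((j:ℝ)+1)))
        = (∑' j : ℕ, Real.exp (-A * ((j:ℝ)+1)^2) * Real.cos (π * (x - t) / (2*L) * ((j:ℝ)+1)))
          - ∑' j : ℕ, Real.exp (-A * ((j:ℝ)+1)^2) * Real.cos (π * (x + t + 2*L) / (2*L) * ((j:ℝ)+1)) :=
      Summable.tsum_sub (sN (x - t)) (sN (x + t + 2*L))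
    rw [e6, hps (x - t), hps (x + t + 2*L)]
    have hσℓ : σ2 * Real.sqrt (2*π) * ℓ / (2*L) * (Real.sqrt (π/A) / 2) = σ2 := by
      have : σ2 * Real.sqrt (2*π) * ℓ / (2*L) * (Real.sqrt (π/A) / 2)
          = σ2 * (Real.sqrt (2*π) * Real.sqrt (π/A)) * ℓ / (4*L) := by ring
      rw [this, hsqA]
      field_simp
    calc σ2 * Real.sqrt (2 * π) * ℓ / (2 * L) *
          ((Real.sqrt (π / A) * ∑' n : ℤ, g₁ n - 1) / 2 - (Real.sqrt (π / A) * ∑' n : ℤ, g₂ n - 1) / 2)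
        = (σ2 * Real.sqrt (2*π) * ℓ / (2*L) * (Real.sqrt (π/A) / 2)) *
            ((∑' n : ℤ, g₁ n) - ∑' n : ℤ, g₂ n) := by ring
      _ = σ2 * ((∑' n : ℤ, g₁ n) - ∑' n : ℤ, g₂ n) := by rw [hσℓ]
  -- step 3: subtract k and bound everything
  have hinjN : Function.Injective ((↑) : ℕ → ℤ) := fun a b hab => by exact_mod_cast hab
  have hinjM : Function.Injective (fun n : ℕ => (-((n:ℤ) + 1) : ℤ)) := by
    intro a b hab
    simp only at hab
    omega
  have hinjS : Function.Injective (fun n : ℕ => ((n:ℤ) + 1 : ℤ)) := by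
    intro a b hab
    simp only at hab
    omega
  have s1N : Summable fun n : ℕ => g₁ n := sg₁.comp_injective hinjN
  have s1M : Summable fun n : ℕ => g₁ (-((n:ℤ) + 1)) := sg₁.comp_injective hinjM
  have s1S : Summable fun n : ℕ => g₁ ((n:ℤ) + 1) := sg₁.comp_injective hinjS
  have s2N : Summable fun n : ℕ => g₂ n := sg₂.comp_injective hinjN
  have s2M : Summable fun n : ℕ => g₂ (-((n:ℤ) + 1)) := sg₂.comp_injective hinjM
  have s2S : Summable fun n : ℕ => g₂ ((n:ℤ) + 1) := sg₂.comp_injective hinjS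
  have hsplit1 : ∑' n : ℤ, g₁ n
      = g₁ 0 + (∑' n : ℕ, g₁ ((n:ℤ) + 1)) + ∑' n : ℕ, g₁ (-((n:ℤ) + 1)) := by
    rw [tsum_of_nat_of_neg_add_one s1N s1M, Summable.tsum_eq_zero_add s1N]
    push_cast
    ring
  have hsplit2 : ∑' n : ℤ, g₂ n
      = g₂ 0 + (∑' n : ℕ, g₂ ((n:ℤ) + 1)) + ∑' n : ℕ, g₂ (-((n:ℤ) + 1)) := by
    rw [tsum_of_nat_of_neg_add_one s2N s2M, Summable.tsum_eq_zero_add s2N]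
    push_cast
    ring
  have hk0 : k x t = σ2 * g₁ 0 := by
    rw [hk, hg₁]
    norm_num
  set E : ℝ := Real.exp (-2 * (L - B) ^ 2 / ℓ ^ 2) with hEdef
  have hE : 0 < E := Real.exp_pos _
  have key2 : ∀ u w : ℝ, 0 ≤ w → 2*(L - B) + 4*L*w ≤ |u| →
      Real.exp (-u^2/(2*ℓ^2)) ≤ E * Real.exp (-(8*L^2*w^2)/ℓ^2) := by
    intro u w hw hu
    rw [hEdef, ← Real.exp_add, Real.exp_le_exp]
    have h0 : (0:ℝ) ≤ 2*(L - B) + 4*L*w := by nlinarith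
    have h1 : (2*(L - B) + 4*L*w)^2 ≤ u^2 := by
      calc (2*(L - B) + 4*L*w)^2 ≤ |u|^2 := pow_le_pow_left₀ h0 hu 2
        _ = u^2 := sq_abs u
    rw [show -2*(L - B)^2/ℓ^2 + -(8*L^2*w^2)/ℓ^2
        = (-(4*(L - B)^2) + -(16*L^2*w^2))/(2*ℓ^2) by field_simp; ring]
    rw [div_le_div_iff₀ (by positivity) (by positivity)]
    nlinarith [h1, mul_nonneg (mul_nonneg (show (0:ℝ) ≤ L - B by linarith) hL.le) hw,
      sq_nonneg ℓ, mul_nonneg (mul_nonneg (mul_nonneg (show (0:ℝ) ≤ L - B by linarith) hL.le) hw) (sq_nonneg ℓ)]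
  have sM : Summable (fun j : ℕ => E * Real.exp (-(8*L^2*(j:ℝ)^2)/ℓ^2)) := by
    apply Summable.mul_left
    have h := hsgp_summable_exp_neg_nat_sq (c := 8*L^2/ℓ^2) (by positivity)
    refine h.congr fun j => ?_
    congr 1
    field_simp
  -- termwise bounds
  have hb1 : ∀ j : ℕ, g₁ ((j:ℤ) + 1) ≤ E * Real.exp (-(8*L^2*(j:ℝ)^2)/ℓ^2) := by
    intro j
    have hj : (0:ℝ) ≤ (j:ℝ) := Nat.cast_nonneg j
    have h := key2 (x - t - 4*L*((j:ℝ) + 1)) (j:ℝ) hj (le_abs.mpr (Or.inr (by nlinarith)))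
    calc g₁ ((j:ℤ) + 1) = Real.exp (-(x - t - 4*L*((j:ℝ) + 1))^2/(2*ℓ^2)) := by
          simp only [hg₁]; push_cast; ring_nf
      _ ≤ _ := h
  have hb2 : ∀ j : ℕ, g₁ (-((j:ℤ) + 1)) ≤ E * Real.exp (-(8*L^2*(j:ℝ)^2)/ℓ^2) := by
    intro j
    have hj : (0:ℝ) ≤ (j:ℝ) := Nat.cast_nonneg j
    have h := key2 (x - t - 4*L*(-((j:ℝ) + 1))) (j:ℝ) hj (le_abs.mpr (Or.inl (by nlinarith)))
    calc g₁ (-((j:ℤ) + 1)) = Real.exp (-(x - t - 4*L*(-((j:ℝ) + 1)))^2/(2*ℓ^2)) := by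
          simp only [hg₁]; push_cast; ring_nf
      _ ≤ _ := h
  have hb3 : ∀ j : ℕ, g₂ ((j:ℤ) + 1) ≤ E * Real.exp (-(8*L^2*(j:ℝ)^2)/ℓ^2) := by
    intro j
    have hj : (0:ℝ) ≤ (j:ℝ) := Nat.cast_nonneg j
    have h := key2 (x + t + 2*L - 4*L*((j:ℝ) + 1)) (j:ℝ) hj (le_abs.mpr (Or.inr (by nlinarith)))
    calc g₂ ((j:ℤ) + 1) = Real.exp (-(x + t + 2*L - 4*L*((j:ℝ) + 1))^2/(2*ℓ^2)) := by
          simp only [hg₂]; push_cast; ring_nf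
      _ ≤ _ := h
  have hb4 : ∀ j : ℕ, g₂ (-((j:ℤ) + 1)) ≤ E * Real.exp (-(8*L^2*(j:ℝ)^2)/ℓ^2) := by
    intro j
    have hj : (0:ℝ) ≤ (j:ℝ) := Nat.cast_nonneg j
    have h := key2 (x + t + 2*L - 4*L*(-((j:ℝ) + 1))) (j:ℝ) hj (le_abs.mpr (Or.inl (by nlinarith)))
    calc g₂ (-((j:ℤ) + 1)) = Real.exp (-(x + t + 2*L - 4*L*(-((j:ℝ) + 1)))^2/(2*ℓ^2)) := by
          simp only [hg₂]; push_cast; ring_nf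
      _ ≤ _ := h
  have hb0 : g₂ 0 ≤ E := by
    simp only [hg₂]
    push_cast
    have h := key2 (x + t + 2*L - 4*L*(0:ℝ)) 0 le_rfl (le_abs.mpr (Or.inl (by nlinarith)))
    simp only [mul_zero, sub_zero] at h ⊢
    calc Real.exp (-(x + t + 2*L)^2/(2*ℓ^2)) ≤ E * Real.exp (-(8*L^2*(0:ℝ)^2)/ℓ^2) := by
          simpa using h
      _ = E := by norm_num
  -- sum bounds
  set T : ℝ := ∑' j : ℕ, Real.exp (-(8*L^2*((j:ℝ) + 1)^2)/ℓ^2) with hTdef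
  have sE8 : Summable (fun j : ℕ => Real.exp (-(8*L^2*(j:ℝ)^2)/ℓ^2)) := by
    have h := hsgp_summable_exp_neg_nat_sq (c := 8*L^2/ℓ^2) (by positivity)
    refine h.congr fun j => ?_
    congr 1
    field_simp
  have hT0 : 0 ≤ T := tsum_nonneg fun j => (Real.exp_pos _).le
  have hQ : ∑' j : ℕ, E * Real.exp (-(8*L^2*(j:ℝ)^2)/ℓ^2) = E * (1 + T) := by
    rw [tsum_mul_left]
    congr 1
    rw [Summable.tsum_eq_zero_add sE8, hTdef]
    push_cast
    norm_num
  have hTs : T ≤ Real.sqrt (2*π) * ℓ / (4*L) / 2 := by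
    have h := hsgp_gauss_tail (c := 8*L^2/ℓ^2) (by positivity)
    have e : ∀ j : ℕ, Real.exp (-(8*L^2*((j:ℝ) + 1)^2)/ℓ^2)
        = Real.exp (-(8*L^2/ℓ^2) * ((j:ℝ) + 1)^2) := by
      intro j
      congr 1
      field_simp
    rw [hTdef, tsum_congr e]
    refine h.trans_eq ?_
    rw [show π/(8*L^2/ℓ^2) = (Real.sqrt (2*π) * ℓ / (4*L))^2 by
      rw [div_pow, mul_pow, Real.sq_sqrt (by positivity)]; field_simp; ring]
    rw [Real.sqrt_sq (by positivity)]
  have hX1 : ∑' n : ℕ, g₁ ((n:ℤ) + 1) ≤ E * (1 + T) := (Summable.tsum_le_tsum hb1 s1S sM).trans_eq hQ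
  have hX2 : ∑' n : ℕ, g₁ (-((n:ℤ) + 1)) ≤ E * (1 + T) := (Summable.tsum_le_tsum hb2 s1M sM).trans_eq hQ
  have hY1 : ∑' n : ℕ, g₂ ((n:ℤ) + 1) ≤ E * (1 + T) := (Summable.tsum_le_tsum hb3 s2S sM).trans_eq hQ
  have hY2 : ∑' n : ℕ, g₂ (-((n:ℤ) + 1)) ≤ E * (1 + T) := (Summable.tsum_le_tsum hb4 s2M sM).trans_eq hQ
  -- assemble
  have hdiff : khat x t - k x t
      = σ2 * ((∑' n : ℕ, g₁ ((n:ℤ) + 1)) + (∑' n : ℕ, g₁ (-((n:ℤ) + 1)))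
          - (g₂ 0 + (∑' n : ℕ, g₂ ((n:ℤ) + 1)) + ∑' n : ℕ, g₂ (-((n:ℤ) + 1)))) := by
    rw [hkh, hk0, hsplit1, hsplit2]
    ring
  have hnn : ∀ {f : ℕ → ℝ}, (∀ j, f j = f j) → (0:ℝ) ≤ 0 := fun _ => le_rfl
  have n1 : 0 ≤ ∑' n : ℕ, g₁ ((n:ℤ) + 1) := tsum_nonneg fun j => by
    simp only [hg₁]; positivity
  have n2 : 0 ≤ ∑' n : ℕ, g₁ (-((n:ℤ) + 1)) := tsum_nonneg fun j => by
    simp only [hg₁]; positivity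
  have n3 : 0 ≤ ∑' n : ℕ, g₂ ((n:ℤ) + 1) := tsum_nonneg fun j => by
    simp only [hg₂]; positivity
  have n4 : 0 ≤ ∑' n : ℕ, g₂ (-((n:ℤ) + 1)) := tsum_nonneg fun j => by
    simp only [hg₂]; positivity
  have n0 : 0 ≤ g₂ 0 := by simp only [hg₂]; positivity
  rw [hdiff, abs_mul, abs_of_pos hσ]
  have habs : |(∑' n : ℕ, g₁ ((n:ℤ) + 1)) + (∑' n : ℕ, g₁ (-((n:ℤ) + 1)))
      - (g₂ 0 + (∑' n : ℕ, g₂ ((n:ℤ) + 1)) + ∑' n : ℕ, g₂ (-((n:ℤ) + 1)))|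
      ≤ E * (1 + T) + E * (1 + T) + (E + (E * (1 + T) + E * (1 + T))) := by
    rw [abs_le]
    constructor <;> nlinarith [hb0, hX1, hX2, hY1, hY2]
  refine (mul_le_mul_of_nonneg_left habs hσ.le).trans ?_
  have hs0 : 0 ≤ Real.sqrt (2*π) * ℓ / (4*L) := by positivity
  have hgoal : σ2 * (E * (1 + T) + E * (1 + T) + (E + (E * (1 + T) + E * (1 + T))))
      ≤ σ2 * 5 * (3 + Real.sqrt (2 * π) * ℓ / (4 * L)) * E := by
    have h1 : E * (1 + T) + E * (1 + T) + (E + (E * (1 + T) + E * (1 + T)))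
        = E * (5 + 4 * T) := by ring
    rw [h1]
    have h2 : 5 + 4 * T ≤ 5 * (3 + Real.sqrt (2 * π) * ℓ / (4 * L)) := by
      have : Real.sqrt (2*π) * ℓ / (4*L) = Real.sqrt (2 * π) * ℓ / (4 * L) := by norm_num
      nlinarith [hTs, hs0]
    calc σ2 * (E * (5 + 4 * T)) ≤ σ2 * (E * (5 * (3 + Real.sqrt (2 * π) * ℓ / (4 * L)))) := by
          have := mul_le_mul_of_nonneg_left h2 hE.le
          exact mul_le_mul_of_nonneg_left this hσ.le
      _ = σ2 * 5 * (3 + Real.sqrt (2 * π) * ℓ / (4 * L)) * E := by ring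
  exact hgoal
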